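/- For every number of alternatives m ≥ 4 and every number of agents n ≥ 4, there is no anonymous and neutral cardinal decision scheme that is u-efficient and u-strategyproof. -/
import Mathlib


open Classical

noncomputable section

variable {A : Type*} [Fintype A]

/-- A (weak) preference relation: complete and transitive. -/
def IsPref (r : A → A → Prop) : Prop :=
  (∀ x y, r x y ∨ r y x) ∧ ∀ x y z, r x y → r y z → r x z

/-- A lottery over the alternatives. -/
def Lottery (A : Type*) [Fintype A] :=
  {p : A → ℝ // (∀ x, 0 ≤ p x) ∧ ∑ x, p x = 1}

/-- Probability that lottery `p` yields an alternative at least as good as `x` w.r.t. `r`. -/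
def upperSum (r : A → A → Prop) (p : Lottery A) (x : A) : ℝ :=
  ∑ y, if r y x then p.1 y else 0

/-- `p` (weakly) stochastically dominates `q` w.r.t. the preference relation `r`. -/
def SDGe (r : A → A → Prop) (p q : Lottery A) : Prop :=
  ∀ x, upperSum r q x ≤ upperSum r p x

/-- Strict stochastic dominance. -/
def SDGt (r : A → A → Prop) (p q : Lottery A) : Prop :=
  SDGe r p q ∧ ¬ SDGe r q p

/-- A profile assigning a preference relation to each of `n` agents; validity. -/
def ValidProfile {n : ℕ} (R : Fin n → A → A → Prop) : Prop :=
  ∀ i, IsPref (R i)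

/-- `p` is SD-efficient at profile `R`. -/
def SDEfficientAt {n : ℕ} (R : Fin n → A → A → Prop) (p : Lottery A) : Prop :=
  ¬ ∃ q : Lottery A, (∀ i, SDGe (R i) q p) ∧ ∃ i, SDGt (R i) q p

def Anonymous {n : ℕ} (f : (Fin n → A → A → Prop) → Lottery A) : Prop :=
  ∀ R : Fin n → A → A → Prop, ValidProfile R →
    ∀ σ : Equiv.Perm (Fin n), f (R ∘ σ) = f R

/-- Relabel a preference relation by a permutation of the alternatives. -/
def relabel (π : Equiv.Perm A) (r : A → A → Prop) : A → A → Prop :=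
  fun x y => r (π.symm x) (π.symm y)

def relabelProfile {n : ℕ} (π : Equiv.Perm A) (R : Fin n → A → A → Prop) :
    Fin n → A → A → Prop :=
  fun i => relabel π (R i)

def Neutral {n : ℕ} (f : (Fin n → A → A → Prop) → Lottery A) : Prop :=
  ∀ R : Fin n → A → A → Prop, ValidProfile R →
    ∀ (π : Equiv.Perm A) (x : A), (f (relabelProfile π R)).1 (π x) = (f R).1 x

def Efficient {n : ℕ} (f : (Fin n → A → A → Prop) → Lottery A) : Prop :=
  ∀ R : Fin n → A → A → Prop, ValidProfile R → SDEfficientAt R (f R)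

def Strategyproof {n : ℕ} (f : (Fin n → A → A → Prop) → Lottery A) : Prop :=
  ¬ ∃ (R : Fin n → A → A → Prop) (i : Fin n) (r : A → A → Prop),
      ValidProfile R ∧ IsPref r ∧ SDGt (R i) (f (Function.update R i r)) (f R)


/-- Expected utility of a lottery. -/
noncomputable def expUtil {A : Type*} [Fintype A] (u : A → ℝ) (p : Lottery A) : ℝ :=
  ∑ x, p.1 x * u x

section AuxCDS

variable {B : Type*} [Fintype B] [DecidableEq B]

def fiveUtil (a b c d : B) (va vb vc vd ve : ℝ) : B → ℝ :=
  fun x => if x = a then va else if x = b then vb else if x = c then vc else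
    if x = d then vd else ve

lemma expUtil_fiveUtil (p : Lottery B) (a b c d : B)
    (hab : a ≠ b) (hac : a ≠ c) (had : a ≠ d) (hbc : b ≠ c) (hbd : b ≠ d) (hcd : c ≠ d)
    (va vb vc vd ve : ℝ) :
    expUtil (fiveUtil a b c d va vb vc vd ve) p =
      ve + p.1 a * (va - ve) + p.1 b * (vb - ve) + p.1 c * (vc - ve) + p.1 d * (vd - ve) := by
  have hpt : ∀ x : B, p.1 x * (fiveUtil a b c d va vb vc vd ve) x =
      p.1 x * ve + ((if x = a then p.1 x * (va - ve) else 0)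
        + (if x = b then p.1 x * (vb - ve) else 0)
        + (if x = c then p.1 x * (vc - ve) else 0)
        + (if x = d then p.1 x * (vd - ve) else 0)) := by
    intro x
    unfold fiveUtil
    by_cases hxa : x = a
    · subst hxa
      simp [hab, hac, had]
      ring
    · by_cases hxb : x = b
      · subst hxb
        simp [hxa, hbc, hbd]
        ring
      · by_cases hxc : x = c
        · subst hxc
          simp [hxa, hxb, hcd]
          ring
        · by_cases hxd : x = d
          · subst hxd
            simp [hxa, hxb, hxc]
            ring
          · simp [hxa, hxb, hxc, hxd]
  unfold expUtil
  rw [Finset.sum_congr rfl (fun x _ => hpt x)]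
  rw [Finset.sum_add_distrib, Finset.sum_add_distrib, Finset.sum_add_distrib,
    Finset.sum_add_distrib]
  rw [← Finset.sum_mul, p.2.2]
  simp [Finset.sum_ite_eq']
  ring

def twoPt (a b : B) (h : a ≠ b) : Lottery B :=
  ⟨fun x => if x = a then 1/2 else if x = b then 1/2 else 0, by
    constructor
    · intro x
      dsimp only
      split_ifs <;> norm_num
    · have hpt : ∀ x : B, (if x = a then (1:ℝ)/2 else if x = b then 1/2 else 0)
          = (if x = a then (1:ℝ)/2 else 0) + (if x = b then (1:ℝ)/2 else 0) := by
        intro x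
        by_cases hxa : x = a
        · subst hxa; simp [h]
        · by_cases hxb : x = b
          · subst hxb; simp [hxa]
          · simp [hxa, hxb]
      rw [Finset.sum_congr rfl (fun x _ => hpt x), Finset.sum_add_distrib]
      simp [Finset.sum_ite_eq']
      norm_num⟩

lemma lottery_four_sum_le (p : Lottery B) (a b c d : B)
    (hab : a ≠ b) (hac : a ≠ c) (had : a ≠ d) (hbc : b ≠ c) (hbd : b ≠ d) (hcd : c ≠ d) :
    p.1 a + p.1 b + p.1 c + p.1 d ≤ 1 := by
  have h : ∑ x ∈ ({a, b, c, d} : Finset B), p.1 x ≤ ∑ x, p.1 x :=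
    Finset.sum_le_sum_of_subset_of_nonneg (Finset.subset_univ _) (fun x _ _ => p.2.1 x)
  rw [p.2.2] at h
  have h2 : ∑ x ∈ ({a, b, c, d} : Finset B), p.1 x = p.1 a + p.1 b + p.1 c + p.1 d := by
    rw [show ({a, b, c, d} : Finset B) = insert a (insert b (insert c {d})) from rfl]
    rw [Finset.sum_insert (by simp [hab, hac, had]),
      Finset.sum_insert (by simp [hbc, hbd]),
      Finset.sum_insert (by simp [hcd]), Finset.sum_singleton]
    ring
  linarith

omit [DecidableEq B] in
lemma expUtil_const_zero (p : Lottery B) : expUtil (fun _ => (0:ℝ)) p = 0 := by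
  simp [expUtil]

lemma fiveUtil_comp_swap_ac (a b c d : B)
    (hab : a ≠ b) (hac : a ≠ c) (had : a ≠ d) (hbc : b ≠ c) (hbd : b ≠ d) (hcd : c ≠ d)
    (va vb vc vd ve : ℝ) :
    (fiveUtil a b c d va vb vc vd ve) ∘ (Equiv.swap a c) =
      fiveUtil a b c d vc vb va vd ve := by
  funext x
  simp only [Function.comp_apply]
  by_cases hxa : x = a
  · subst hxa
    rw [Equiv.swap_apply_left]
    simp [fiveUtil, Ne.symm hac, Ne.symm hbc]
  · by_cases hxc : x = c
    · subst hxc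
      rw [Equiv.swap_apply_right]
      simp [fiveUtil, Ne.symm hac, Ne.symm hbc]
    · rw [Equiv.swap_apply_of_ne_of_ne hxa hxc]
      by_cases hxb : x = b
      · subst hxb; simp [fiveUtil, hxa, hxc]
      · by_cases hxd : x = d
        · subst hxd; simp [fiveUtil, hxa, hxb, hxc]
        · simp [fiveUtil, hxa, hxb, hxc, hxd]

lemma fiveUtil_comp_swapab_swapcd (a b c d : B)
    (hab : a ≠ b) (hac : a ≠ c) (had : a ≠ d) (hbc : b ≠ c) (hbd : b ≠ d) (hcd : c ≠ d)
    (va vb vc vd ve : ℝ) :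
    (fiveUtil a b c d va vb vc vd ve) ∘ ((Equiv.swap a b).trans (Equiv.swap c d)) =
      fiveUtil a b c d vb va vd vc ve := by
  funext x
  simp only [Function.comp_apply, Equiv.trans_apply]
  by_cases hxa : x = a
  · subst hxa
    rw [Equiv.swap_apply_left, Equiv.swap_apply_of_ne_of_ne hbc hbd]
    simp [fiveUtil, Ne.symm hab]
  · by_cases hxb : x = b
    · subst hxb
      rw [Equiv.swap_apply_right, Equiv.swap_apply_of_ne_of_ne hac had]
      simp [fiveUtil, hxa]
    · rw [Equiv.swap_apply_of_ne_of_ne hxa hxb]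
      by_cases hxc : x = c
      · subst hxc
        rw [Equiv.swap_apply_left]
        simp [fiveUtil, hxa, hxb, Ne.symm had, Ne.symm hbd, Ne.symm hcd]
      · by_cases hxd : x = d
        · subst hxd
          rw [Equiv.swap_apply_right]
          simp [fiveUtil, hxa, hxb, hxc, Ne.symm hac, Ne.symm hbc, hcd]
        · rw [Equiv.swap_apply_of_ne_of_ne hxc hxd]
          simp [fiveUtil, hxa, hxb, hxc, hxd]

lemma swapab_swapcd_apply_a (a b c d : B) (hbc : b ≠ c) (hbd : b ≠ d) :
    ((Equiv.swap a b).trans (Equiv.swap c d)) a = b := by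
  rw [Equiv.trans_apply, Equiv.swap_apply_left, Equiv.swap_apply_of_ne_of_ne hbc hbd]

lemma swapab_swapcd_apply_c (a b c d : B) (hac : a ≠ c) (hbc : b ≠ c) :
    ((Equiv.swap a b).trans (Equiv.swap c d)) c = d := by
  rw [Equiv.trans_apply, Equiv.swap_apply_of_ne_of_ne (Ne.symm hac) (Ne.symm hbc),
    Equiv.swap_apply_left]

end AuxCDS

set_option maxHeartbeats 1000000 in
/-- For `m ≥ 4` alternatives and `n ≥ 4` agents, there is no anonymous and neutral cardinal
decision scheme that is u-efficient and u-strategyproof. -/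
theorem no_anonymous_neutral_uEfficient_uStrategyproof_CDS
    (m n : ℕ) (hm : 4 ≤ m) (hn : 4 ≤ n) :
    ¬ ∃ g : (Fin n → Fin m → ℝ) → Lottery (Fin m),
        -- anonymity
        (∀ (U : Fin n → Fin m → ℝ) (σ : Equiv.Perm (Fin n)), g (U ∘ σ) = g U) ∧
        -- neutrality
        (∀ (U : Fin n → Fin m → ℝ) (π : Equiv.Perm (Fin m)) (x : Fin m),
          (g (fun i => U i ∘ π)).1 x = (g U).1 (π x)) ∧
        -- u-efficiency
        (∀ U : Fin n → Fin m → ℝ,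
          ¬ ∃ q : Lottery (Fin m), (∀ i, expUtil (U i) (g U) ≤ expUtil (U i) q) ∧
            ∃ i, expUtil (U i) (g U) < expUtil (U i) q) ∧
        -- u-strategyproofness
        (¬ ∃ (U : Fin n → Fin m → ℝ) (i : Fin n) (u' : Fin m → ℝ),
          expUtil (U i) (g U) < expUtil (U i) (g (Function.update U i u'))) := by
  rintro ⟨g, hanon, hneut, heff, hsp⟩
  -- distinguished alternatives
  obtain ⟨a, hadef⟩ : ∃ x : Fin m, x = ⟨0, by omega⟩ := ⟨_, rfl⟩
  obtain ⟨b, hbdef⟩ : ∃ x : Fin m, x = ⟨1, by omega⟩ := ⟨_, rfl⟩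
  obtain ⟨c, hcdef⟩ : ∃ x : Fin m, x = ⟨2, by omega⟩ := ⟨_, rfl⟩
  obtain ⟨d, hddef⟩ : ∃ x : Fin m, x = ⟨3, by omega⟩ := ⟨_, rfl⟩
  have hab : a ≠ b := fun h => by simp [hadef, hbdef, Fin.ext_iff] at h
  have hac : a ≠ c := fun h => by simp [hadef, hcdef, Fin.ext_iff] at h
  have had : a ≠ d := fun h => by simp [hadef, hddef, Fin.ext_iff] at h
  have hbc : b ≠ c := fun h => by simp [hbdef, hcdef, Fin.ext_iff] at h
  have hbd : b ≠ d := fun h => by simp [hbdef, hddef, Fin.ext_iff] at h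
  have hcd : c ≠ d := fun h => by simp [hcdef, hddef, Fin.ext_iff] at h
  -- distinguished agents
  obtain ⟨i0, hi0def⟩ : ∃ x : Fin n, x = ⟨0, by omega⟩ := ⟨_, rfl⟩
  obtain ⟨i1, hi1def⟩ : ∃ x : Fin n, x = ⟨1, by omega⟩ := ⟨_, rfl⟩
  have hi01 : i0 ≠ i1 := fun h => by simp [hi0def, hi1def, Fin.ext_iff] at h
  -- utility functions
  obtain ⟨u1, hu1def⟩ : ∃ x : Fin m → ℝ, x = fiveUtil a b c d 4 1 0 (-4) (-4) := ⟨_, rfl⟩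
  obtain ⟨u2, hu2def⟩ : ∃ x : Fin m → ℝ, x = fiveUtil a b c d 0 1 4 (-4) (-4) := ⟨_, rfl⟩
  obtain ⟨u1', hu1'def⟩ : ∃ x : Fin m → ℝ, x = fiveUtil a b c d 1 0 (-4) 4 (-4) := ⟨_, rfl⟩
  -- permutations
  obtain ⟨π, hπdef⟩ : ∃ x : Equiv.Perm (Fin m), x = Equiv.swap a c := ⟨_, rfl⟩
  obtain ⟨π', hπ'def⟩ : ∃ x : Equiv.Perm (Fin m), x = (Equiv.swap a b).trans (Equiv.swap c d) := ⟨_, rfl⟩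
  obtain ⟨σ, hσdef⟩ : ∃ x : Equiv.Perm (Fin n), x = Equiv.swap i0 i1 := ⟨_, rfl⟩
  -- profiles
  obtain ⟨R, hRdef⟩ : ∃ x : Fin n → Fin m → ℝ,
      x = fun i => if i = i0 then u1 else if i = i1 then u2 else fun _ => 0 := ⟨_, rfl⟩
  obtain ⟨R', hR'def⟩ : ∃ x : Fin n → Fin m → ℝ,
      x = fun i => if i = i0 then u1' else if i = i1 then u2 else fun _ => 0 := ⟨_, rfl⟩
  have hRi0 : R i0 = u1 := by simp [hRdef]
  have hRi1 : R i1 = u2 := by simp [hRdef, Ne.symm hi01]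
  have hR'i0 : R' i0 = u1' := by simp [hR'def]
  have hR'i1 : R' i1 = u2 := by simp [hR'def, Ne.symm hi01]
  -- the symmetry principle
  have hinv : ∀ (U : Fin n → Fin m → ℝ) (πp : Equiv.Perm (Fin m)) (σp : Equiv.Perm (Fin n)),
      (fun i => U i ∘ πp) = U ∘ σp → ∀ x, (g U).1 (πp x) = (g U).1 x := by
    intro U πp σp h x
    have h1 := hneut U πp x
    rw [h, hanon U σp] at h1
    exact h1.symm
  -- symmetry of R under (a c)
  have hu1π : u1 ∘ π = u2 := by
    rw [hu1def, hu2def, hπdef]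
    exact fiveUtil_comp_swap_ac a b c d hab hac had hbc hbd hcd 4 1 0 (-4) (-4)
  have hu2π : u2 ∘ π = u1 := by
    rw [hu1def, hu2def, hπdef]
    exact fiveUtil_comp_swap_ac a b c d hab hac had hbc hbd hcd 0 1 4 (-4) (-4)
  have hsym1 : (fun i => R i ∘ π) = R ∘ σ := by
    funext i
    simp only [Function.comp_apply]
    by_cases h0 : i = i0
    · rw [h0, hRi0, hσdef, show Equiv.swap i0 i1 i0 = i1 from Equiv.swap_apply_left i0 i1,
        hRi1, hu1π]
    · by_cases h1 : i = i1
      · rw [h1, hRi1, hσdef, show Equiv.swap i0 i1 i1 = i0 from Equiv.swap_apply_right i0 i1,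
          hRi0, hu2π]
      · rw [hσdef, show Equiv.swap i0 i1 i = i from Equiv.swap_apply_of_ne_of_ne h0 h1]
        have hRi : R i = fun _ => 0 := by simp [hRdef, h0, h1]
        rw [hRi]
        rfl
  -- symmetry of R' under (a b)(c d)
  have hu1'π' : u1' ∘ π' = u2 := by
    rw [hu1'def, hu2def, hπ'def]
    exact fiveUtil_comp_swapab_swapcd a b c d hab hac had hbc hbd hcd 1 0 (-4) 4 (-4)
  have hu2π' : u2 ∘ π' = u1' := by
    rw [hu1'def, hu2def, hπ'def]
    exact fiveUtil_comp_swapab_swapcd a b c d hab hac had hbc hbd hcd 0 1 4 (-4) (-4)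
  have hsym2 : (fun i => R' i ∘ π') = R' ∘ σ := by
    funext i
    simp only [Function.comp_apply]
    by_cases h0 : i = i0
    · rw [h0, hR'i0, hσdef, show Equiv.swap i0 i1 i0 = i1 from Equiv.swap_apply_left i0 i1,
        hR'i1, hu1'π']
    · by_cases h1 : i = i1
      · rw [h1, hR'i1, hσdef, show Equiv.swap i0 i1 i1 = i0 from Equiv.swap_apply_right i0 i1,
          hR'i0, hu2π']
      · rw [hσdef, show Equiv.swap i0 i1 i = i from Equiv.swap_apply_of_ne_of_ne h0 h1]
        have hRi : R' i = fun _ => 0 := by simp [hR'def, h0, h1]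
        rw [hRi]
        rfl
  -- invariance consequences
  have hpac : (g R).1 c = (g R).1 a := by
    have h := hinv R π σ hsym1 a
    rwa [hπdef, Equiv.swap_apply_left] at h
  have hpab : (g R').1 b = (g R').1 a := by
    have h := hinv R' π' σ hsym2 a
    rwa [hπ'def, swapab_swapcd_apply_a a b c d hbc hbd] at h
  have hpdc : (g R').1 d = (g R').1 c := by
    have h := hinv R' π' σ hsym2 c
    rwa [hπ'def, swapab_swapcd_apply_c a b c d hac hbc] at h
  -- expected utility computations at R
  have hE1 : expUtil u1 (g R) = -4 + (g R).1 a * 8 + (g R).1 b * 5 + (g R).1 c * 4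
      + (g R).1 d * 0 := by
    rw [hu1def, expUtil_fiveUtil (g R) a b c d hab hac had hbc hbd hcd]
    norm_num
  have hE2 : expUtil u2 (g R) = -4 + (g R).1 a * 4 + (g R).1 b * 5 + (g R).1 c * 8
      + (g R).1 d * 0 := by
    rw [hu2def, expUtil_fiveUtil (g R) a b c d hab hac had hbc hbd hcd]
    norm_num
  obtain ⟨q, hqdef⟩ : ∃ x : Lottery (Fin m), x = twoPt a c hac := ⟨_, rfl⟩
  have hq_a : q.1 a = 1/2 := by simp [hqdef, twoPt]
  have hq_b : q.1 b = 0 := by simp [hqdef, twoPt, Ne.symm hab, hbc]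
  have hq_c : q.1 c = 1/2 := by simp [hqdef, twoPt, Ne.symm hac]
  have hq_d : q.1 d = 0 := by simp [hqdef, twoPt, Ne.symm had, Ne.symm hcd]
  have hEu1q : expUtil u1 q = 2 := by
    rw [hu1def, expUtil_fiveUtil q a b c d hab hac had hbc hbd hcd, hq_a, hq_b, hq_c, hq_d]
    norm_num
  have hEu2q : expUtil u2 q = 2 := by
    rw [hu2def, expUtil_fiveUtil q a b c d hab hac had hbc hbd hcd, hq_a, hq_b, hq_c, hq_d]
    norm_num
  have hsum4 : (g R).1 a + (g R).1 b + (g R).1 c + (g R).1 d ≤ 1 :=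
    lottery_four_sum_le (g R) a b c d hab hac had hbc hbd hcd
  have hb0 := (g R).2.1 b
  have hd0 := (g R).2.1 d
  have hE1le : expUtil u1 (g R) ≤ 2 := by rw [hE1]; linarith
  have hE2le : expUtil u2 (g R) ≤ 2 := by rw [hE2]; linarith
  have hdom : ∀ i, expUtil (R i) (g R) ≤ expUtil (R i) q := by
    intro i
    by_cases h0 : i = i0
    · subst h0; rw [hRi0, hEu1q]; exact hE1le
    · by_cases h1 : i = i1
      · subst h1; rw [hRi1, hEu2q]; exact hE2le
      · have hRi : R i = fun _ => 0 := by simp [hRdef, h0, h1]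
        rw [hRi, expUtil_const_zero, expUtil_const_zero]
  have hE1eq : expUtil u1 (g R) = 2 := by
    refine le_antisymm hE1le (not_lt.mp fun hlt => heff R ⟨q, hdom, i0, ?_⟩)
    rw [hRi0, hEu1q]
    exact hlt
  -- expected utility computations at R'
  have hE1' : expUtil u1' (g R') = -4 + (g R').1 a * 5 + (g R').1 b * 4 + (g R').1 c * 0
      + (g R').1 d * 8 := by
    rw [hu1'def, expUtil_fiveUtil (g R') a b c d hab hac had hbc hbd hcd]
    norm_num
  have hE2' : expUtil u2 (g R') = -4 + (g R').1 a * 4 + (g R').1 b * 5 + (g R').1 c * 8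
      + (g R').1 d * 0 := by
    rw [hu2def, expUtil_fiveUtil (g R') a b c d hab hac had hbc hbd hcd]
    norm_num
  obtain ⟨q', hq'def⟩ : ∃ x : Lottery (Fin m), x = twoPt a b hab := ⟨_, rfl⟩
  have hq'_a : q'.1 a = 1/2 := by simp [hq'def, twoPt]
  have hq'_b : q'.1 b = 1/2 := by simp [hq'def, twoPt, Ne.symm hab]
  have hq'_c : q'.1 c = 0 := by simp [hq'def, twoPt, Ne.symm hac, Ne.symm hbc]
  have hq'_d : q'.1 d = 0 := by simp [hq'def, twoPt, Ne.symm had, Ne.symm hbd]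
  have hEu1'q' : expUtil u1' q' = 1/2 := by
    rw [hu1'def, expUtil_fiveUtil q' a b c d hab hac had hbc hbd hcd,
      hq'_a, hq'_b, hq'_c, hq'_d]
    norm_num
  have hEu2q' : expUtil u2 q' = 1/2 := by
    rw [hu2def, expUtil_fiveUtil q' a b c d hab hac had hbc hbd hcd,
      hq'_a, hq'_b, hq'_c, hq'_d]
    norm_num
  have hsum4' : (g R').1 a + (g R').1 b + (g R').1 c + (g R').1 d ≤ 1 :=
    lottery_four_sum_le (g R') a b c d hab hac had hbc hbd hcd
  have hc0' := (g R').2.1 c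
  have hE1'le : expUtil u1' (g R') ≤ 1/2 := by rw [hE1']; linarith
  have hE2'le : expUtil u2 (g R') ≤ 1/2 := by rw [hE2']; linarith
  have hdom' : ∀ i, expUtil (R' i) (g R') ≤ expUtil (R' i) q' := by
    intro i
    by_cases h0 : i = i0
    · subst h0; rw [hR'i0, hEu1'q']; exact hE1'le
    · by_cases h1 : i = i1
      · subst h1; rw [hR'i1, hEu2q']; exact hE2'le
      · have hRi : R' i = fun _ => 0 := by simp [hR'def, h0, h1]
        rw [hRi, expUtil_const_zero, expUtil_const_zero]
  have hE1'eq : expUtil u1' (g R') = 1/2 := by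
    refine le_antisymm hE1'le (not_lt.mp fun hlt => heff R' ⟨q', hdom', i0, ?_⟩)
    rw [hR'i0, hEu1'q']
    exact hlt
  -- pin down g R'
  rw [hE1'] at hE1'eq
  have hc'zero : (g R').1 c = 0 := by
    refine le_antisymm ?_ hc0'
    linarith
  have ha'half : (g R').1 a = 1/2 := by linarith
  -- final strategyproofness violation
  have hupd : Function.update R i0 u1' = R' := by
    funext i
    by_cases h0 : i = i0
    · subst h0
      rw [Function.update_self, hR'i0]
    · rw [Function.update_of_ne h0]
      simp [hRdef, hR'def, h0]
  have hfinal : expUtil u1 (g R') = 5/2 := by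
    rw [hu1def, expUtil_fiveUtil (g R') a b c d hab hac had hbc hbd hcd,
      hc'zero, ha'half, hpab, ha'half, hpdc, hc'zero]
    norm_num
  exact hsp ⟨R, i0, u1', by rw [hupd, hRi0, hE1eq, hfinal]; norm_num⟩


end
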